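/- Let V ⊆ ℂⁿ be open and connected, let F, G : V → ℂ be holomorphic, and suppose there is a point a ∈ V with all coordinates real and an open neighbourhood W of a in ℝⁿ, with W ⊆ V ∩ ℝⁿ, such that F = G on W. Then F = G on V. -/

import Mathlib

open Metric Filter Topology
set_option maxHeartbeats 1000000

theorem stmt_1 (n : ℕ) (V : Set (Fin n → ℂ)) (hV : IsOpen V) (hVc : IsPreconnected V)
    (F G : (Fin n → ℂ) → ℂ) (hF : AnalyticOn ℂ F V) (hG : AnalyticOn ℂ G V)
    (a : Fin n → ℝ) (ha : (fun i => (a i : ℂ)) ∈ V)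
    (W : Set (Fin n → ℝ)) (hW : IsOpen W) (haW : a ∈ W)
    (hWV : ∀ x ∈ W, (fun i => (x i : ℂ)) ∈ V)
    (hFG : ∀ x ∈ W, F (fun i => (x i : ℂ)) = G (fun i => (x i : ℂ))) :
    Set.EqOn F G V := by
  set a' : Fin n → ℂ := fun i => (a i : ℂ) with ha'
  set h : (Fin n → ℂ) → ℂ := F - G with hh
  have hF' : AnalyticOnNhd ℂ F V := hV.analyticOn_iff_analyticOnNhd.1 hF
  have hG' : AnalyticOnNhd ℂ G V := hV.analyticOn_iff_analyticOnNhd.1 hG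
  have hh' : AnalyticOnNhd ℂ h V := hF'.sub hG'
  -- pick ε
  obtain ⟨ε₁, hε₁, hbV⟩ := Metric.isOpen_iff.1 hV a' ha
  obtain ⟨ε₂, hε₂, hbW⟩ := Metric.isOpen_iff.1 hW a haW
  set ε := min ε₁ ε₂ with hε
  have hεpos : 0 < ε := lt_min hε₁ hε₂
  have hballV : Metric.ball a' ε ⊆ V := (Metric.ball_subset_ball (min_le_left _ _)).trans hbV
  have hballW : Metric.ball a ε ⊆ W := (Metric.ball_subset_ball (min_le_right _ _)).trans hbW
  -- key induction
  have key : ∀ j : ℕ, ∀ w : Fin n → ℂ, w ∈ Metric.ball a' ε →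
      (∀ i : Fin n, j ≤ i.val → (w i).im = 0) → h w = 0 := by
    intro j
    induction j with
    | zero =>
      intro w hwb hwr
      set x : Fin n → ℝ := fun i => (w i).re with hx
      have hwx : w = fun i => (x i : ℂ) := by
        funext i
        apply Complex.ext <;> simp [hx, hwr i (Nat.zero_le _)]
      have hxW : x ∈ W := by
        apply hballW
        rw [mem_ball] at hwb ⊢
        have hco := (dist_pi_lt_iff hεpos).1 hwb
        refine (dist_pi_lt_iff hεpos).2 fun i => ?_
        have hci : dist (w i) (a' i) < ε := hco i
        calc dist (x i) (a i) = |(w i - a' i).re| := by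
              simp [hx, Real.dist_eq, ha', Complex.sub_re]
          _ ≤ ‖w i - a' i‖ := Complex.abs_re_le_norm _
          _ < ε := by simpa [Complex.dist_eq] using hci
      rw [hh, Pi.sub_apply, hwx, hFG x hxW, sub_self]
    | succ j ih =>
      intro w hwb hwr
      by_cases hjn : j < n
      · set J : Fin n := ⟨j, hjn⟩ with hJ
        set u : ℂ → (Fin n → ℂ) := fun z => Function.update w J z with hu
        have humem : ∀ z ∈ Metric.ball (a' J) ε, u z ∈ Metric.ball a' ε := by
          intro z hz
          refine (dist_pi_lt_iff hεpos).2 fun i => ?_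
          rcases eq_or_ne i J with rfl | hiJ
          · simpa [hu] using hz
          · simp [hu, Function.update_of_ne hiJ]
            exact lt_of_le_of_lt (dist_le_pi_dist w a' i) hwb
        have hφ : AnalyticOnNhd ℂ (h ∘ u) (Metric.ball (a' J) ε) := by
          intro z hz
          have hua : AnalyticAt ℂ u z := by
            have : u = fun z => w + (z - w J) • (Pi.single J 1 : Fin n → ℂ) := by
              funext z i
              rcases eq_or_ne i J with rfl | hiJ
              · simp [hu]
              · simp [hu, Function.update_of_ne hiJ, Pi.single_eq_of_ne hiJ]
            rw [this]
            exact analyticAt_const.add (((analyticAt_id).sub analyticAt_const).smul analyticAt_const)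
          exact (hh' (u z) (hballV (humem z hz))).comp hua
        have hfreq : ∃ᶠ z in 𝓝[≠] (a' J), (h ∘ u) z = 0 := by
          set c : ℕ → ℝ := fun m => a J + ε / (2 * ((m : ℝ) + 1)) with hc
          have hdm : ∀ m : ℕ, 0 < ε / (2 * ((m : ℝ) + 1)) ∧ ε / (2 * ((m : ℝ) + 1)) < ε := by
            intro m
            constructor
            · positivity
            · rw [div_lt_iff₀ (by positivity)]
              nlinarith [hεpos]
          have htend : Tendsto (fun m : ℕ => ((c m : ℝ) : ℂ)) atTop (𝓝[≠] (a' J)) := by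
            apply tendsto_nhdsWithin_of_tendsto_nhds_of_eventually_within
            · have h1 : Tendsto (fun m : ℕ => ε / (2 * ((m : ℝ) + 1))) atTop (𝓝 0) := by
                apply Tendsto.div_atTop tendsto_const_nhds
                exact Tendsto.const_mul_atTop (by norm_num)
                  (tendsto_natCast_atTop_atTop.atTop_add tendsto_const_nhds)
              have h2 : Tendsto c atTop (𝓝 (a J)) := by
                have := h1.const_add (a J)
                simpa [hc] using this
              exact (Complex.continuous_ofReal.tendsto _).comp h2
            · filter_upwards with m
              simp only [Set.mem_compl_iff, Set.mem_singleton_iff]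
              intro hcon
              have hcr : c m = a J := by
                have h' : ((c m : ℝ) : ℂ) = ((a J : ℝ) : ℂ) := by simpa [ha'] using hcon
                exact_mod_cast h'
              have := (hdm m).1
              simp only [hc] at hcr
              linarith
          apply htend.frequently
          apply Frequently.of_forall
          intro m
          have hum : u ((c m : ℝ) : ℂ) ∈ Metric.ball a' ε := by
            apply humem
            rw [mem_ball, Complex.dist_eq]
            have he : ((c m : ℝ) : ℂ) - a' J = ((ε / (2 * ((m : ℝ) + 1)) : ℝ) : ℂ) := by
              simp only [hc, ha']
              push_cast
              ring
            rw [he]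
            rw [Complex.norm_real, Real.norm_eq_abs, abs_of_pos (hdm m).1]
            exact (hdm m).2
          show h (u ((c m : ℝ) : ℂ)) = 0
          apply ih _ hum
          intro i hi
          rcases eq_or_ne i J with rfl | hiJ
          · simp [hu]
          · rw [hu]
            simp only [Function.update_of_ne hiJ]
            apply hwr
            rcases Nat.lt_or_ge i.val (j+1) with hlt | hge
            · exfalso
              have : i.val = j := le_antisymm (Nat.lt_succ_iff.1 hlt) hi
              exact hiJ (Fin.ext this)
            · exact hge
        have := hφ.eqOn_zero_of_preconnected_of_frequently_eq_zero
          ((convex_ball _ _).isPreconnected) (Metric.mem_ball_self hεpos) hfreq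
        have hwJ : w J ∈ Metric.ball (a' J) ε := by
          rw [mem_ball]
          exact lt_of_le_of_lt (dist_le_pi_dist w a' J) hwb
        have := this hwJ
        simpa [hu, Function.update_eq_self] using this
      · apply ih w hwb
        intro i hi
        apply hwr
        have : i.val < n := i.isLt
        omega
  -- conclude
  have heq : F =ᶠ[𝓝 a'] G := by
    filter_upwards [Metric.ball_mem_nhds a' hεpos] with w hw
    have := key n w hw (fun i hi => absurd i.isLt (by omega))
    simpa [hh, sub_eq_zero] using this
  exact hF'.eqOn_of_preconnected_of_eventuallyEq hG' hVc ha heq
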